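/- Let μ be a partition of n with hook numbers h_x, and let f^μ = n!/∏_{x∈μ} h_x be the number of standard Young tableaux of shape μ. If the sum of the hook numbers satisfies Σ_{x∈μ} h_x ≤ S, then (n/e)^n · (n/S)^n < f^μ; in particular for the u×v rectangle μ = (u^v) with n = uv, one has (n/(u+v))^n · (2/e)^n < f^μ. -/

import Mathlib

open Finset

/-- The hook number of the box `(i, j)` of a Young diagram `μ`:
the boxes to its right in its row, the boxes below it in its column, plus the box itself. -/
def hookLength (μ : YoungDiagram) (i j : ℕ) : ℕ :=
  (μ.rowLen i - j) + (μ.colLen j - i) - 1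

/-- Let `μ` be a partition of `n` (a Young diagram with `n` boxes, `n ≥ 1`) with hook
numbers `h_x`, and let `f^μ = n!/∏_{x∈μ} h_x` be the number of standard Young tableaux of
shape `μ`.  If `Σ_{x∈μ} h_x ≤ S`, then `(n/e)^n · (n/S)^n < f^μ`.  In particular, for the
`u×v` rectangle `μ = (u^v)` with `n = uv`, one has `(n/(u+v))^n · (2/e)^n < f^μ`. -/

lemma amgm {ι : Type*} (s : Finset ι) (f : ι → ℝ) (n : ℕ) (hn : 0 < n)
    (hc : s.card = n) (hf : ∀ i ∈ s, 0 ≤ f i) :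
    (∏ i ∈ s, f i) ≤ ((∑ i ∈ s, f i) / n) ^ n := by
  have hn0 : (n : ℝ) ≠ 0 := Nat.cast_ne_zero.mpr hn.ne'
  have hw : ∑ _i ∈ s, (n : ℝ)⁻¹ = 1 := by
    rw [Finset.sum_const, hc, nsmul_eq_mul, mul_inv_cancel₀ hn0]
  have h1 := Real.geom_mean_le_arith_mean_weighted s (fun _ => (n : ℝ)⁻¹) f
    (fun i _ => by positivity) hw hf
  rw [Real.finset_prod_rpow s f hf] at h1
  have h2 : ∑ i ∈ s, (n : ℝ)⁻¹ * f i = (∑ i ∈ s, f i) / n := by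
    rw [← Finset.mul_sum]; ring
  rw [h2] at h1
  have hP : 0 ≤ ∏ i ∈ s, f i := Finset.prod_nonneg hf
  have h3 : ((∏ i ∈ s, f i) ^ ((n : ℝ)⁻¹)) ^ (n : ℕ) = ∏ i ∈ s, f i := by
    rw [← Real.rpow_natCast ((∏ i ∈ s, f i) ^ ((n : ℝ)⁻¹)) n, ← Real.rpow_mul hP,
      inv_mul_cancel₀ hn0, Real.rpow_one]
  calc (∏ i ∈ s, f i) = ((∏ i ∈ s, f i) ^ ((n : ℝ)⁻¹)) ^ (n : ℕ) := h3.symm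
    _ ≤ ((∑ i ∈ s, f i) / n) ^ n := pow_le_pow_left₀ (Real.rpow_nonneg hP _) h1 n

lemma pow_lt_fact_mul_exp (n : ℕ) (hn : 0 < n) :
    (n : ℝ) ^ n < (n.factorial : ℝ) * Real.exp 1 ^ n := by
  have hN : (0 : ℝ) < n := Nat.cast_pos.mpr hn
  have key : (n : ℝ) ^ n / n.factorial < Real.exp n := by
    have h1 : ∑ i ∈ Finset.range (n + 1), (n : ℝ) ^ i / i.factorial ≤ Real.exp n :=
      Real.sum_le_exp_of_nonneg hN.le _
    have h2 : (1 : ℝ) + (n : ℝ) ^ n / n.factorial ≤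
        ∑ i ∈ Finset.range (n + 1), (n : ℝ) ^ i / i.factorial := by
      have h0 : ({0, n} : Finset ℕ) ⊆ Finset.range (n + 1) := by
        intro x hx; simp only [Finset.mem_insert, Finset.mem_singleton] at hx
        rcases hx with h | h <;> simp [h]
      have h5 := Finset.sum_le_sum_of_subset_of_nonneg h0
        (fun i _ _ => by positivity : ∀ i ∈ Finset.range (n+1), i ∉ ({0, n} : Finset ℕ) → 0 ≤ (n : ℝ) ^ i / i.factorial)
      rwa [Finset.sum_pair (by omega : (0:ℕ) ≠ n), pow_zero, Nat.factorial_zero,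
        Nat.cast_one, div_one] at h5
    have hfn : (0:ℝ) < (n : ℝ) ^ n / n.factorial := by positivity
    linarith
  have hfact : (0 : ℝ) < n.factorial := Nat.cast_pos.mpr n.factorial_pos
  have hexp : Real.exp (n : ℝ) = Real.exp 1 ^ n := by
    rw [← Real.exp_nat_mul, mul_one]
  rw [div_lt_iff₀ hfact, hexp] at key
  linarith [key]

lemma gauss1 (m : ℕ) : 2 * ∑ j ∈ Finset.range m, (m - j) = m * (m + 1) := by
  induction m with
  | zero => simp
  | succ k ih =>
    have h1 : ∑ j ∈ Finset.range (k+1), (k+1-j) = (∑ j ∈ Finset.range k, (k-j)) + k + 1 := by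
      rw [Finset.sum_range_succ]
      have h2 : ∀ j ∈ Finset.range k, k+1-j = (k-j)+1 := fun j hj => by
        simp only [Finset.mem_range] at hj; omega
      rw [Finset.sum_congr rfl h2, Finset.sum_add_distrib, Finset.sum_const, Finset.card_range, smul_eq_mul, mul_one]
      omega
    rw [h1]
    ring_nf
    ring_nf at ih
    linarith [ih]

lemma gauss2 (m : ℕ) : 2 * ∑ j ∈ Finset.range m, (m - 1 - j) = m * (m - 1) := by
  cases m with
  | zero => simp
  | succ k =>
    rw [Finset.sum_range_succ]
    simp only [Nat.succ_sub_one, Nat.sub_self, Nat.add_zero]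
    have := gauss1 k
    rw [this, Nat.mul_comm]


theorem stmt_19 (μ : YoungDiagram) (n : ℕ) (hn : 0 < n) (hcard : μ.cells.card = n) :
    (∀ S : ℕ, (∑ c ∈ μ.cells, hookLength μ c.1 c.2) ≤ S →
      ((n : ℝ) / Real.exp 1) ^ n * ((n : ℝ) / (S : ℝ)) ^ n <
        (n.factorial : ℝ) / ∏ c ∈ μ.cells, (hookLength μ c.1 c.2 : ℝ)) ∧
    (∀ u v : ℕ, 0 < u → 0 < v → n = u * v →
      μ.cells = Finset.range v ×ˢ Finset.range u →
      ((n : ℝ) / ((u : ℝ) + (v : ℝ))) ^ n * (2 / Real.exp 1) ^ n <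
        (n.factorial : ℝ) / ∏ c ∈ μ.cells, (hookLength μ c.1 c.2 : ℝ)) := by
  have hone : ∀ c ∈ μ.cells, 1 ≤ hookLength μ c.1 c.2 := by
    intro c hc
    rw [YoungDiagram.mem_cells] at hc
    have h1 : c.2 < μ.rowLen c.1 := YoungDiagram.mem_iff_lt_rowLen.mp hc
    have h2 : c.1 < μ.colLen c.2 := YoungDiagram.mem_iff_lt_colLen.mp hc
    unfold hookLength; omega
  have hTn : n ≤ ∑ c ∈ μ.cells, hookLength μ c.1 c.2 := by
    calc n = ∑ _c ∈ μ.cells, 1 := by simp [hcard]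
      _ ≤ _ := Finset.sum_le_sum hone
  have hmain : ∀ S : ℕ, (∑ c ∈ μ.cells, hookLength μ c.1 c.2) ≤ S →
      ((n : ℝ) / Real.exp 1) ^ n * ((n : ℝ) / (S : ℝ)) ^ n <
        (n.factorial : ℝ) / ∏ c ∈ μ.cells, (hookLength μ c.1 c.2 : ℝ) := by
    intro S hS
    have hSn : n ≤ S := hTn.trans hS
    have hN : (0 : ℝ) < n := Nat.cast_pos.mpr hn
    have hSr : (0 : ℝ) < S := Nat.cast_pos.mpr (hn.trans_le hSn)
    have he : (0 : ℝ) < Real.exp 1 := Real.exp_pos 1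
    have hfr : ∀ c ∈ μ.cells, (0 : ℝ) ≤ (hookLength μ c.1 c.2 : ℝ) :=
      fun c _ => Nat.cast_nonneg _
    have hP : (0 : ℝ) < ∏ c ∈ μ.cells, (hookLength μ c.1 c.2 : ℝ) :=
      Finset.prod_pos fun c hc => by exact_mod_cast hone c hc
    have hsum : (∑ c ∈ μ.cells, (hookLength μ c.1 c.2 : ℝ)) ≤ (S : ℝ) := by
      exact_mod_cast (hS : _ ≤ S)
    have hsum0 : (0 : ℝ) ≤ ∑ c ∈ μ.cells, (hookLength μ c.1 c.2 : ℝ) :=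
      Finset.sum_nonneg hfr
    have hAM : (∏ c ∈ μ.cells, (hookLength μ c.1 c.2 : ℝ)) ≤ ((S : ℝ) / n) ^ n := by
      refine (amgm μ.cells _ n hn hcard hfr).trans ?_
      gcongr
    have hfac := pow_lt_fact_mul_exp n hn
    rw [div_pow, div_pow, div_mul_div_comm,
      div_lt_div_iff₀ (by positivity) hP]
    have hb : (n : ℝ) ^ n * (n : ℝ) ^ n * ∏ c ∈ μ.cells, (hookLength μ c.1 c.2 : ℝ)
        ≤ (n : ℝ) ^ n * (n : ℝ) ^ n * (((S : ℝ) / n) ^ n) := by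
      have := mul_le_mul_of_nonneg_left hAM (by positivity : (0:ℝ) ≤ (n : ℝ) ^ n * (n : ℝ) ^ n)
      linarith
    have hc' : (n : ℝ) ^ n * (n : ℝ) ^ n * (((S : ℝ) / n) ^ n) = (n : ℝ) ^ n * (S : ℝ) ^ n := by
      rw [div_pow]; field_simp
    have hd : (n : ℝ) ^ n * (S : ℝ) ^ n < (n.factorial : ℝ) * Real.exp 1 ^ n * (S : ℝ) ^ n :=
      mul_lt_mul_of_pos_right hfac (by positivity)
    calc (n : ℝ) ^ n * (n : ℝ) ^ n * ∏ c ∈ μ.cells, (hookLength μ c.1 c.2 : ℝ)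
        ≤ (n : ℝ) ^ n * (S : ℝ) ^ n := by rw [← hc']; exact hb
      _ < (n.factorial : ℝ) * Real.exp 1 ^ n * (S : ℝ) ^ n := hd
      _ = (n.factorial : ℝ) * (Real.exp 1 ^ n * (S : ℝ) ^ n) := by ring
  refine ⟨hmain, ?_⟩
  intro u v hu hv hnuv hcells
  have hmem : ∀ i j : ℕ, (i, j) ∈ μ ↔ i < v ∧ j < u := by
    intro i j
    rw [← YoungDiagram.mem_cells, hcells, Finset.mem_product, Finset.mem_range, Finset.mem_range]
  have hrow : ∀ i, i < v → μ.rowLen i = u := by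
    intro i hi
    have a : ¬ u < μ.rowLen i := fun h => by
      have := (hmem i u).mp (YoungDiagram.mem_iff_lt_rowLen.mpr h); omega
    have b : u - 1 < μ.rowLen i :=
      YoungDiagram.mem_iff_lt_rowLen.mp ((hmem i (u - 1)).mpr ⟨hi, by omega⟩)
    omega
  have hcol : ∀ j, j < u → μ.colLen j = v := by
    intro j hj
    have a : ¬ v < μ.colLen j := fun h => by
      have := (hmem v j).mp (YoungDiagram.mem_iff_lt_colLen.mpr h); omega
    have b : v - 1 < μ.colLen j :=
      YoungDiagram.mem_iff_lt_colLen.mp ((hmem (v - 1) j).mpr ⟨by omega, hj⟩)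
    omega
  have hhook : ∀ c ∈ Finset.range v ×ˢ Finset.range u,
      hookLength μ c.1 c.2 = (u - c.2) + (v - c.1) - 1 := by
    intro c hc
    rw [Finset.mem_product, Finset.mem_range, Finset.mem_range] at hc
    unfold hookLength
    rw [hrow c.1 hc.1, hcol c.2 hc.2]
  set T := ∑ c ∈ μ.cells, hookLength μ c.1 c.2 with hTdef
  have h2T : 2 * T = u * v * (u + v) := by
    rw [hTdef, hcells, Finset.sum_congr rfl hhook, Finset.sum_product]
    have hin : ∀ i ∈ Finset.range v, (∑ j ∈ Finset.range u, ((u - j) + (v - i) - 1))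
        = (∑ j ∈ Finset.range u, (u - 1 - j)) + u * (v - i) := by
      intro i hi
      rw [Finset.mem_range] at hi
      have hterm : ∀ j ∈ Finset.range u, (u - j) + (v - i) - 1 = (u - 1 - j) + (v - i) := by
        intro j hj; rw [Finset.mem_range] at hj; omega
      rw [Finset.sum_congr rfl hterm, Finset.sum_add_distrib, Finset.sum_const,
        Finset.card_range, smul_eq_mul]
    rw [Finset.sum_congr rfl hin, Finset.sum_add_distrib, Finset.sum_const,
      Finset.card_range, smul_eq_mul, ← Finset.mul_sum]
    have g1 := gauss1 v
    obtain ⟨u', rfl⟩ : ∃ u', u = u' + 1 := ⟨u - 1, by omega⟩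
    calc 2 * (v * (∑ j ∈ Finset.range (u' + 1), (u' + 1 - 1 - j))
            + (u' + 1) * ∑ i ∈ Finset.range v, (v - i))
        = v * (2 * ∑ j ∈ Finset.range (u' + 1), (u' + 1 - 1 - j))
            + (u' + 1) * (2 * ∑ i ∈ Finset.range v, (v - i)) := by ring
      _ = v * ((u' + 1) * ((u' + 1) - 1)) + (u' + 1) * (v * (v + 1)) := by
            rw [gauss2 (u' + 1), g1]
      _ = (u' + 1) * v * ((u' + 1) + v) := by simp only [Nat.add_sub_cancel]; ring
  have hTpos : 0 < T := hn.trans_le hTn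
  have hcast : (T : ℝ) * 2 = (u : ℝ) * v * ((u : ℝ) + v) := by
    have := congrArg (Nat.cast : ℕ → ℝ) h2T
    push_cast at this
    linarith
  have hTle := hmain T le_rfl
  have hNuv : (n : ℝ) = (u : ℝ) * v := by rw [hnuv]; push_cast; ring
  have huv0 : (0 : ℝ) < (u : ℝ) + v := by
    have : (0:ℝ) < u := Nat.cast_pos.mpr hu
    have : (0:ℝ) < v := Nat.cast_pos.mpr hv
    positivity
  have hT0 : (0 : ℝ) < (T : ℝ) := Nat.cast_pos.mpr hTpos
  have he : (0 : ℝ) < Real.exp 1 := Real.exp_pos 1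
  have heq : ((n : ℝ) / ((u : ℝ) + (v : ℝ))) * (2 / Real.exp 1)
      = ((n : ℝ) / Real.exp 1) * ((n : ℝ) / (T : ℝ)) := by
    rw [hNuv]
    field_simp
    linear_combination hcast
  rw [← mul_pow, heq, mul_pow]
  exact hTle
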